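/- Let h₀, h₁ ∈ ℝ and for z : ℝ → ℝ continuously differentiable on [0,1] set φ(z) = (1/2)∫₀¹ z'(x)² dx + h₁·z(1) − h₀·z(0). Then ∫₀¹ z'(x)² dx ≤ 4·φ(z) + 2·(|h₀| + |h₁|)² + 6·∫₀¹ z(x)² dx. -/

import Mathlib

open MeasureTheory Set

/-- Coercivity estimate (3.4): for `φ(z) = (1/2)∫₀¹ (z')² + h₁ z(1) − h₀ z(0)`,
`∫₀¹ (z')² ≤ 4 φ(z) + 2(|h₀| + |h₁|)² + 6 ∫₀¹ z²`. -/
theorem stmt_10 (h0 h1 : ℝ) (z z' : ℝ → ℝ)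
    (hderiv : ∀ x ∈ Icc (0:ℝ) 1, HasDerivAt z (z' x) x)
    (hcont : ContinuousOn z' (Icc (0:ℝ) 1)) :
    (∫ x in (0:ℝ)..1, (z' x) ^ 2) ≤
      4 * ((1 / 2) * (∫ x in (0:ℝ)..1, (z' x) ^ 2) + h1 * z 1 - h0 * z 0)
        + 2 * (|h0| + |h1|) ^ 2 + 6 * (∫ x in (0:ℝ)..1, (z x) ^ 2) := by
  have huIcc : uIcc (0:ℝ) 1 = Icc (0:ℝ) 1 := uIcc_of_le zero_le_one
  have hzc : ContinuousOn z (Icc (0:ℝ) 1) := fun x hx =>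
    (hderiv x hx).continuousAt.continuousWithinAt
  set A := ∫ x in (0:ℝ)..1, (z x) ^ 2 with hA
  set E := ∫ x in (0:ℝ)..1, (z' x) ^ 2 with hEdef
  have hprodc : ContinuousOn (fun x => 2 * z x * z' x) (Icc (0:ℝ) 1) :=
    (continuousOn_const.mul hzc).mul hcont
  have hprodint : IntervalIntegrable (fun x => 2 * z x * z' x) volume 0 1 := by
    apply ContinuousOn.intervalIntegrable; rwa [huIcc]
  have habsint : IntervalIntegrable (fun x => |2 * z x * z' x|) volume 0 1 := by
    apply ContinuousOn.intervalIntegrable; rw [huIcc]; exact hprodc.abs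
  have hzsqint : IntervalIntegrable (fun x => (z x) ^ 2) volume 0 1 := by
    apply ContinuousOn.intervalIntegrable; rw [huIcc]; exact hzc.pow 2
  have hz'sqint : IntervalIntegrable (fun x => (z' x) ^ 2) volume 0 1 := by
    apply ContinuousOn.intervalIntegrable; rw [huIcc]; exact hcont.pow 2
  set D := ∫ x in (0:ℝ)..1, |2 * z x * z' x| with hDdef
  -- FTC on subintervals
  have hftc : ∀ x ∈ Icc (0:ℝ) 1, ∀ y ∈ Icc (0:ℝ) 1,
      (∫ t in x..y, 2 * z t * z' t) = z y ^ 2 - z x ^ 2 := by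
    intro x hx y hy
    have hsub : uIcc x y ⊆ Icc (0:ℝ) 1 := uIcc_subset_Icc hx hy
    apply intervalIntegral.integral_eq_sub_of_hasDerivAt
    · intro t ht
      have h := (hderiv t (hsub ht)).pow 2
      simpa [pow_one, mul_comm, mul_assoc, mul_left_comm, Pi.pow_def] using h
    · exact hprodint.mono_set (by rw [huIcc]; exact hsub)
  -- each subinterval integral bounded by D
  have hsubD : ∀ x ∈ Icc (0:ℝ) 1, ∀ y ∈ Icc (0:ℝ) 1,
      z y ^ 2 - z x ^ 2 ≤ D := by
    intro x hx y hy
    rw [← hftc x hx y hy]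
    have hInt : ∀ a b : ℝ, a ∈ Icc (0:ℝ) 1 → b ∈ Icc (0:ℝ) 1 → a ≤ b →
        (∫ t in a..b, 2 * z t * z' t) ≤ D := by
      intro a b ha hb hab
      calc (∫ t in a..b, 2 * z t * z' t) ≤ ∫ t in a..b, |2 * z t * z' t| := by
            apply intervalIntegral.integral_mono_on hab
              (hprodint.mono_set (by rw [huIcc]; exact uIcc_subset_Icc ha hb))
              (habsint.mono_set (by rw [huIcc]; exact uIcc_subset_Icc ha hb))
            exact fun u _ => le_abs_self _
        _ ≤ D := intervalIntegral.integral_mono_interval ha.1 hab hb.2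
            (Filter.Eventually.of_forall fun u => abs_nonneg _) habsint
    rcases le_total x y with h | h
    · exact hInt x y hx hy h
    · have := hInt y x hy hx h
      have hneg : (∫ t in x..y, 2 * z t * z' t) = -∫ t in y..x, 2 * z t * z' t :=
        intervalIntegral.integral_symm y x
      have hnn : -(∫ t in y..x, 2 * z t * z' t) ≤ ∫ t in y..x, |2 * z t * z' t| := by
        calc -(∫ t in y..x, 2 * z t * z' t) ≤ |∫ t in y..x, 2 * z t * z' t| := neg_le_abs _
          _ ≤ ∫ t in y..x, |2 * z t * z' t| := intervalIntegral.abs_integral_le_integral_abs h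
      have hle2 : (∫ t in y..x, |2 * z t * z' t|) ≤ D :=
        intervalIntegral.integral_mono_interval hy.1 h hx.2
          (Filter.Eventually.of_forall fun u => abs_nonneg _) habsint
      linarith [hneg ▸ (hnn.trans hle2)]
  -- key pointwise bound: z y ^ 2 ≤ A + D
  have hkey : ∀ y ∈ Icc (0:ℝ) 1, z y ^ 2 ≤ A + D := by
    intro y hy
    have h1' : z y ^ 2 - D = ∫ x in (0:ℝ)..1, (z y ^ 2 - D) := by
      rw [intervalIntegral.integral_const]; simp
    have h2' : (∫ x in (0:ℝ)..1, (z y ^ 2 - D)) ≤ A := by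
      apply intervalIntegral.integral_mono_on zero_le_one (intervalIntegrable_const) hzsqint
      intro x hx
      linarith [hsubD x hx y hy]
    linarith [h1' ▸ h2']
  -- D ≤ 2A + E/2
  have hDbound : D ≤ 2 * A + E / 2 := by
    have hmono : D ≤ ∫ x in (0:ℝ)..1, (2 * (z x) ^ 2 + (z' x) ^ 2 / 2) := by
      apply intervalIntegral.integral_mono_on zero_le_one habsint
        ((hzsqint.const_mul 2).add (hz'sqint.div_const 2))
      intro x _
      have h := sq_nonneg (2 * |z x| - |z' x|)
      have h2 : |2 * z x * z' x| = 2 * (|z x| * |z' x|) := by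
        rw [abs_mul, abs_mul]; simp [abs_of_nonneg, mul_assoc]
      rw [h2]
      nlinarith [sq_abs (z x), sq_abs (z' x)]
    have hsplit : (∫ x in (0:ℝ)..1, (2 * (z x) ^ 2 + (z' x) ^ 2 / 2)) = 2 * A + E / 2 := by
      rw [intervalIntegral.integral_add (hzsqint.const_mul 2) (hz'sqint.div_const 2),
        intervalIntegral.integral_const_mul, intervalIntegral.integral_div]
    linarith [hsplit ▸ hmono]
  -- finish
  have hz0 : z 0 ^ 2 ≤ A + D := hkey 0 (by norm_num)
  have hz1 : z 1 ^ 2 ≤ A + D := hkey 1 (by norm_num)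
  set s := max |z 0| |z 1| with hs
  have hs0 : |z 0| ≤ s := le_max_left _ _
  have hs1 : |z 1| ≤ s := le_max_right _ _
  have hsnn : 0 ≤ s := le_trans (abs_nonneg _) hs0
  have hssq : s ^ 2 ≤ A + D := by
    rcases max_cases |z 0| |z 1| with ⟨h, _⟩ | ⟨h, _⟩
    · rw [hs, h, sq_abs]; exact hz0
    · rw [hs, h, sq_abs]; exact hz1
  have f1 : -(h1 * z 1) ≤ |h1| * s := by
    calc -(h1 * z 1) ≤ |h1 * z 1| := neg_le_abs _
      _ = |h1| * |z 1| := abs_mul _ _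
      _ ≤ |h1| * s := mul_le_mul_of_nonneg_left hs1 (abs_nonneg _)
  have f2 : h0 * z 0 ≤ |h0| * s := by
    calc h0 * z 0 ≤ |h0 * z 0| := le_abs_self _
      _ = |h0| * |z 0| := abs_mul _ _
      _ ≤ |h0| * s := mul_le_mul_of_nonneg_left hs0 (abs_nonneg _)
  nlinarith [sq_nonneg (|h0| + |h1| - s), hssq, hDbound, f1, f2]
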